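/- Consecutive flat triangles of a local trajectory share an edge (upward step): for every a ∈ ℤ³ and distinct i,j ∈ {1,2,3}, the intersection π(T(a;i,j)) ∩ π(T(a−eⱼ;j,i)) equals the projected segment π([a, a+eᵢ]), i.e. the image under π of the convex hull of {a, a+eᵢ}. -/

import Mathlib

noncomputable section

/-- Ambient space ℝ³. -/
abbrev E3 := EuclideanSpace ℝ (Fin 3)

/-- Standard basis vector eᵢ of ℝ³. -/
def ee3 (i : Fin 3) : E3 := EuclideanSpace.single i 1

/-- 𝟙 = e₁ + e₂ + e₃. -/
def ones3 : E3 := ∑ i, ee3 i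

/-- Orthogonal projection π onto the hyperplane H = {v ∈ ℝ³ : v₁+v₂+v₃ = 0},
    given by π(v) = v − ((v₁+v₂+v₃)/3)·𝟙. -/
def proj3 (v : E3) : E3 := v - ((∑ i, v i) / 3) • ones3

/-- A lattice point of ℤ³ viewed in ℝ³. -/
def toE3 (a : Fin 3 → ℤ) : E3 := WithLp.toLp 2 (fun n => (a n : ℝ))

/-- Slant triangle T(a;i,j) = conv{a, a+eᵢ, a+eᵢ+eⱼ}. -/
def slant3 (a : Fin 3 → ℤ) (i j : Fin 3) : Set E3 :=
  convexHull ℝ {toE3 a, toE3 a + ee3 i, toE3 a + ee3 i + ee3 j}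

/-- Flat triangle: the image π(T(a;i,j)). -/
def flat3 (a : Fin 3 → ℤ) (i j : Fin 3) : Set E3 := proj3 '' slant3 a i j

def projL : E3 →ₗ[ℝ] E3 where
  toFun := proj3
  map_add' x y := by
    simp only [proj3, PiLp.add_apply, Finset.sum_add_distrib, add_div, add_smul]
    abel
  map_smul' c x := by
    simp only [proj3, PiLp.smul_apply, smul_eq_mul, ← Finset.mul_sum, RingHom.id_apply,
      mul_div_assoc, mul_smul, smul_sub]

lemma projL_eq : proj3 = projL := rfl

lemma hull_pair_const {V : Type*} [AddCommGroup V] [Module ℝ V] (g : V →ₗ[ℝ] ℝ)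
    (p q : V) (hq : g q = g p) : ∀ y ∈ convexHull ℝ ({p, q} : Set V), g y = g p := by
  intro y hy
  rw [convexHull_pair] at hy
  obtain ⟨u, v, hu, hv, huv, rfl⟩ := hy
  simp only [map_add, map_smul, smul_eq_mul, hq]
  rw [← add_mul, huv, one_mul]

lemma tri_side {V : Type*} [AddCommGroup V] [Module ℝ V] (g : V →ₗ[ℝ] ℝ)
    (p q s : V) (hq : g q = g p) (hs : g p < g s) :
    ∀ x ∈ convexHull ℝ ({p, q, s} : Set V),
      g p ≤ g x ∧ (g x = g p → x ∈ convexHull ℝ ({p, q} : Set V)) := by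
  intro x hx
  have hset : ({p, q, s} : Set V) = insert s {p, q} := by
    ext z; simp only [Set.mem_insert_iff, Set.mem_singleton_iff]; tauto
  rw [hset, convexHull_insert (x := s) (s := ({p, q} : Set V)) ⟨p, by simp⟩] at hx
  obtain ⟨a', ha', y, hy, hseg⟩ := mem_convexJoin.mp hx
  rw [Set.mem_singleton_iff] at ha'
  obtain ⟨u, v, hu, hv, huv, rfl⟩ := hseg
  have hgy := hull_pair_const g p q hq y hy
  have hgx : g (u • a' + v • y) = u * g s + v * g p := by
    simp only [map_add, map_smul, smul_eq_mul, hgy, ha']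
  constructor
  · rw [hgx]
    have hsplit : g p = u * g p + v * g p := by rw [← add_mul, huv, one_mul]
    have hmul : u * g p ≤ u * g s := mul_le_mul_of_nonneg_left hs.le hu
    linarith
  · intro h0
    rw [hgx] at h0
    have hu0 : u = 0 := by
      by_contra h'
      have hupos : 0 < u := lt_of_le_of_ne hu (Ne.symm h')
      have hsplit : g p = u * g p + v * g p := by rw [← add_mul, huv, one_mul]
      have hmul : u * g p < u * g s := by
        exact (mul_lt_mul_iff_right₀ hupos).mpr hs
      linarith
    have hv1 : v = 1 := by linarith
    simpa [hu0, hv1] using hy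

lemma tri_inter {V : Type*} [AddCommGroup V] [Module ℝ V] (g : V →ₗ[ℝ] ℝ)
    (p q r r' : V) (hq : g q = g p) (hr : g p < g r) (hr' : g r' < g p) :
    convexHull ℝ {p, q, r} ∩ convexHull ℝ {p, q, r'} = convexHull ℝ ({p, q} : Set V) := by
  apply Set.Subset.antisymm
  · rintro x ⟨hx1, hx2⟩
    have h1 := tri_side g p q r hq hr x hx1
    have h2 := tri_side (-g) p q r' (by simpa using hq) (by simpa using hr') x hx2
    have hle : g x ≤ g p := by
      have := h2.1; simpa using this
    exact h1.2 (le_antisymm hle h1.1)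
  · apply Set.subset_inter <;>
      exact convexHull_mono (by intro z hz; rcases hz with h|h <;> simp_all)

def coordL (j k : Fin 3) : E3 →ₗ[ℝ] ℝ where
  toFun v := v j - v k
  map_add' x y := by simp [PiLp.add_apply]; ring
  map_smul' c x := by simp [PiLp.smul_apply]; ring

lemma ee3_apply' (i m : Fin 3) : ee3 i m = if m = i then 1 else 0 := by
  simp [ee3, EuclideanSpace.single_apply]

lemma ones3_apply (m : Fin 3) : ones3 m = 1 := by
  rw [ones3, Fin.sum_univ_three]
  simp only [PiLp.add_apply, ee3_apply']
  fin_cases m <;> simp [Fin.ext_iff]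

lemma coordL_proj3 (j k : Fin 3) (v : E3) : coordL j k (proj3 v) = v j - v k := by
  simp only [coordL, proj3, LinearMap.coe_mk, AddHom.coe_mk, PiLp.sub_apply, PiLp.smul_apply,
    ones3_apply, smul_eq_mul, mul_one]
  ring

lemma ee3_apply (i m : Fin 3) : ee3 i m = if m = i then 1 else 0 := by
  simp [ee3, EuclideanSpace.single_apply]

lemma toE3_sub_single (a : Fin 3 → ℤ) (j : Fin 3) :
    toE3 (a - Pi.single j 1) = toE3 a - ee3 j := by
  ext m
  simp only [toE3, Pi.sub_apply, PiLp.sub_apply, ee3_apply, PiLp.toLp_apply]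
  by_cases h : m = j <;> simp [h, Pi.single_apply]

/-- π(T(a;i,j)) ∩ π(T(a−eⱼ;j,i)) equals the projected segment
π([a, a+eᵢ]). -/
theorem stmt6 (a : Fin 3 → ℤ) (i j : Fin 3) (hij : i ≠ j) :
    flat3 a i j ∩ flat3 (a - Pi.single j 1) j i =
      proj3 '' convexHull ℝ {toE3 a, toE3 a + ee3 i} := by
  have hvij : i.val ≠ j.val := fun h => hij (Fin.ext h)
  have hk3 : 3 - i.val - j.val < 3 := by omega
  set k : Fin 3 := ⟨3 - i.val - j.val, hk3⟩ with hk
  have hki : k.val ≠ i.val := by simp only [hk]; omega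
  have hkj : k.val ≠ j.val := by simp only [hk]; omega
  have himg : ∀ s : Set E3, proj3 '' convexHull ℝ s = convexHull ℝ (proj3 '' s) := by
    intro s
    rw [projL_eq]
    exact projL.image_convexHull s
  have hf1 : flat3 a i j = convexHull ℝ
      {proj3 (toE3 a), proj3 (toE3 a + ee3 i), proj3 (toE3 a + ee3 i + ee3 j)} := by
    unfold flat3 slant3
    rw [himg]
    simp only [Set.image_insert_eq, Set.image_singleton]
  have h2 : slant3 (a - Pi.single j 1) j i
      = convexHull ℝ ({toE3 a, toE3 a + ee3 i, toE3 a - ee3 j} : Set E3) := by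
    unfold slant3
    rw [toE3_sub_single]
    have e1 : toE3 a - ee3 j + ee3 j = toE3 a := by abel
    have e2 : toE3 a - ee3 j + ee3 j + ee3 i = toE3 a + ee3 i := by abel
    rw [e1]
    congr 1
    ext z
    simp only [Set.mem_insert_iff, Set.mem_singleton_iff]
    tauto
  have hf2 : flat3 (a - Pi.single j 1) j i = convexHull ℝ
      {proj3 (toE3 a), proj3 (toE3 a + ee3 i), proj3 (toE3 a - ee3 j)} := by
    unfold flat3
    rw [h2, himg]
    simp only [Set.image_insert_eq, Set.image_singleton]
  have gval : ∀ v : E3, coordL j k (proj3 v) = v j - v k := coordL_proj3 j k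
  have hnij : ¬ (j = i) := fun h => hij h.symm
  have hnki : ¬ (k = i) := fun h => hki (congrArg Fin.val h)
  have hnkj : ¬ (k = j) := fun h => hkj (congrArg Fin.val h)
  have hq : coordL j k (proj3 (toE3 a + ee3 i)) = coordL j k (proj3 (toE3 a)) := by
    rw [gval, gval]
    simp only [PiLp.add_apply, ee3_apply, if_neg hnij, if_neg hnki]
    ring
  have hr : coordL j k (proj3 (toE3 a)) < coordL j k (proj3 (toE3 a + ee3 i + ee3 j)) := by
    rw [gval, gval]
    simp only [PiLp.add_apply, ee3_apply, if_neg hnij, if_neg hnki, if_pos rfl, if_neg hnkj, if_true]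
    norm_num
  have hr' : coordL j k (proj3 (toE3 a - ee3 j)) < coordL j k (proj3 (toE3 a)) := by
    rw [gval, gval]
    simp only [PiLp.sub_apply, ee3_apply, if_pos rfl, if_neg hnkj, if_true]
    norm_num
  rw [hf1, hf2, himg, Set.image_insert_eq, Set.image_singleton]
  exact tri_inter (coordL j k) (proj3 (toE3 a)) (proj3 (toE3 a + ee3 i))
    (proj3 (toE3 a + ee3 i + ee3 j)) (proj3 (toE3 a - ee3 j)) hq hr hr'
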